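/- Let S̄ = S ⊕_{d,γ} ℕ be a GSI-semigroup with S = ⟨v₀,…,v_h⟩, v₀ < ⋯ < v_h, d ≥ 2, gcd(d,γ)=1 and γ > max{d·F(S), d·v_h}. Then every integer x with dv₀ < x < γ and x ∉ dS is a gap of S̄, and every integer x with 1 ≤ x ≤ dv₀ − 1 is a gap of S̄. -/

import Mathlib

/-- A numerical semigroup: a subset of ℕ containing 0, closed under addition,
with finite complement. -/
def IsNumericalSemigroup (S : Set ℕ) : Prop :=
  0 ∈ S ∧ (∀ a ∈ S, ∀ b ∈ S, a + b ∈ S) ∧ Sᶜ.Finite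

/-- Frobenius number, as an integer (so that F(ℕ) = -1). -/
noncomputable def Frob (S : Set ℕ) : ℤ :=
  sSup (((fun n : ℕ => (n : ℤ)) '' Sᶜ) ∪ {-1})

/-- Submonoid of ℕ generated by a set. -/
def GenSg (A : Set ℕ) : Set ℕ := (AddSubmonoid.closure A : Set ℕ)

/-- The gluing S ⊕_{d,γ} ℕ = d·S + ℕ·γ. -/
def Gluing (S : Set ℕ) (d γ : ℕ) : Set ℕ :=
  {x | ∃ s ∈ S, ∃ k : ℕ, x = d * s + k * γ}

/-- e_k = gcd(v₀, …, v_k). -/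
def ee (v : ℕ → ℕ) (k : ℕ) : ℕ := (Finset.range (k + 1)).gcd v

/-- (v₀,…,v_h) is a characteristic sequence. -/
def IsCharSeq (h : ℕ) (v : ℕ → ℕ) : Prop :=
  (∀ i ≤ h, 0 < v i) ∧
  (∀ k, 1 ≤ k → k ≤ h → ee v k < ee v (k - 1)) ∧
  ee v h = 1 ∧
  ∀ k, 1 ≤ k → k + 1 ≤ h → ee v (k - 1) * v k < ee v k * v (k + 1)

/-- T is a GSI-semigroup: T = S ⊕_{d,γ} ℕ where S = ⟨A⟩ is a numerical
semigroup, d ≥ 2, gcd(d,γ)=1 and γ > max{d·F(S), d·(max A)}. -/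
def IsGSI (T : Set ℕ) : Prop :=
  ∃ (A : Finset ℕ) (d γ : ℕ), A.Nonempty ∧ 2 ≤ d ∧ Nat.Coprime d γ ∧
    IsNumericalSemigroup (GenSg ↑A) ∧
    (γ : ℤ) > d * Frob (GenSg ↑A) ∧ (∀ a ∈ A, d * a < γ) ∧
    T = Gluing (GenSg ↑A) d γ

theorem gaps_below_gamma (A : Finset ℕ) (hA : A.Nonempty) (d γ : ℕ)
    (hd : 2 ≤ d) (hco : Nat.Coprime d γ)
    (hS : IsNumericalSemigroup (GenSg ↑A))
    (hγF : (γ : ℤ) > d * Frob (GenSg ↑A)) (hγA : ∀ a ∈ A, d * a < γ) :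
    (∀ x : ℕ, 1 ≤ x → x ≤ d * A.min' hA - 1 → x ∉ Gluing (GenSg ↑A) d γ) ∧
    (∀ x : ℕ, d * A.min' hA < x → x < γ →
      (¬ ∃ s ∈ GenSg (↑A : Set ℕ), x = d * s) →
      x ∉ Gluing (GenSg ↑A) d γ) := by
  have hmA : A.min' hA ∈ A := A.min'_mem hA
  have hlow : ∀ s ∈ GenSg (↑A : Set ℕ), s = 0 ∨ A.min' hA ≤ s := by
    intro s hs
    induction hs using AddSubmonoid.closure_induction with
    | mem a ha => exact Or.inr (A.min'_le a ha)
    | zero => exact Or.inl rfl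
    | add a b _ _ ha hb =>
      rcases ha with h | h
      · simpa [h] using hb
      · exact Or.inr (le_trans h (Nat.le_add_right a b))
  constructor
  · intro x hx1 hx2 hxg
    obtain ⟨s, hs, k, hk⟩ := hxg
    have hγm : d * A.min' hA < γ := hγA _ hmA
    rcases hlow s hs with h0 | hms
    · -- x = k * γ, k ≥ 1
      subst h0
      simp only [Nat.mul_zero, Nat.zero_add] at hk
      have hk1 : 1 ≤ k := by
        rcases Nat.eq_zero_or_pos k with h | h
        · subst h; simp at hk; omega
        · exact h
      have : γ ≤ x := by
        calc γ = 1 * γ := (Nat.one_mul γ).symm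
        _ ≤ k * γ := Nat.mul_le_mul_right γ hk1
        _ = x := hk.symm
      omega
    · have : d * A.min' hA ≤ d * s := Nat.mul_le_mul_left d hms
      omega
  · intro x hx1 hx2 hnd hxg
    obtain ⟨s, hs, k, hk⟩ := hxg
    rcases Nat.eq_zero_or_pos k with h0 | hk1
    · subst h0; simp at hk; exact hnd ⟨s, hs, hk⟩
    · have : γ ≤ x := by
        calc γ = 1 * γ := (Nat.one_mul γ).symm
        _ ≤ k * γ := Nat.mul_le_mul_right γ hk1
        _ ≤ x := by omega
      omega
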